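/- There exists a constant c > 0 (depending only on λ = sup_k m_k) with the following property. Let n ∈ ℕ_+ have Vilenkin expansion n = ∑_{i=1}^{s} ∑_{k=l_i}^{m_i} n_k M_k, i.e. the digits n_k of n are nonzero exactly for k lying in the blocks [l_1, m_1], …, [l_s, m_s], where 0 ≤ l_1 ≤ m_1, and l_i ≤ m_i and m_{i−1} ≤ l_i − 2 for 2 ≤ i ≤ s (consecutive blocks are separated by a gap of at least two positions). Then for every index i with l_i ≥ 1 and every x ∈ I_{l_i+1}(e_{l_i−1} + e_{l_i}) one has n · |K_n(x)| ≥ c · M_{l_i}^2. -/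

import Mathlib

open Finset
open scoped ENNReal NNReal

noncomputable section

namespace Vilenkin

/-- The generalized powers `M_0 = 1`, `M_{k+1} = m_k M_k`. -/
def M (m : ℕ → ℕ) : ℕ → ℕ
  | 0 => 1
  | k + 1 => m k * M m k

/-- The `j`-th digit of `n` in the mixed-radix system determined by `m`. -/
def digit (m : ℕ → ℕ) (n j : ℕ) : ℕ := (n / M m j) % m j

/-- The Vilenkin group `G_m`, the complete direct product of the cyclic groups `Z_{m_k}`. -/
abbrev G (m : ℕ → ℕ) : Type := ∀ k : ℕ, ZMod (m k)

instance (n : ℕ) : MeasurableSpace (ZMod n) := ⊤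

/-- The generalized Rademacher functions `r_k(x) = exp(2 π i x_k / m_k)`. -/
def rad (m : ℕ → ℕ) (k : ℕ) (x : G m) : ℂ :=
  Complex.exp (2 * Real.pi * Complex.I * ((x k).val : ℂ) / (m k : ℂ))

/-- The Vilenkin system `ψ_n = ∏_k r_k^{n_k}` (the product is finite). -/
def psi (m : ℕ → ℕ) (n : ℕ) (x : G m) : ℂ :=
  ∏ j ∈ Finset.range (n + 1), rad m j x ^ digit m n j

/-- The Dirichlet kernels `D_n = ∑_{k=0}^{n-1} ψ_k`. -/
def D (m : ℕ → ℕ) (n : ℕ) (x : G m) : ℂ :=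
  ∑ k ∈ Finset.range n, psi m k x

/-- The Fejér kernels `K_n = (1/n) ∑_{k=0}^{n-1} D_k`. -/
def K (m : ℕ → ℕ) (n : ℕ) (x : G m) : ℂ :=
  (n : ℂ)⁻¹ * ∑ k ∈ Finset.range n, D m k x

/-- The cylinder `I_n(x) = {y : y_j = x_j for j < n}`. -/
def cyl (m : ℕ → ℕ) (n : ℕ) (x : G m) : Set (G m) := {y | ∀ j < n, y j = x j}

/-- The element `e_n` with `n`-th coordinate `1` and all other coordinates `0`. -/
def e (m : ℕ → ℕ) (n : ℕ) : G m := fun k => if k = n then 1 else 0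


variable {m : ℕ → ℕ}

lemma M_dvd {j k : ℕ} (h : j ≤ k) : M m j ∣ M m k := by
  induction k with
  | zero => simpa using (Nat.le_zero.mp h) ▸ dvd_refl _
  | succ k ih =>
    rcases Nat.lt_or_ge j (k+1) with h' | h'
    · exact dvd_mul_of_dvd_right (ih (Nat.lt_succ_iff.mp h')) _
    · have : j = k + 1 := le_antisymm h h'
      simp [this]

lemma two_pow_le_M (hm : ∀ k, 2 ≤ m k) (k : ℕ) : 2 ^ k ≤ M m k := by
  induction k with
  | zero => simp [M]
  | succ k ih =>
    have := Nat.mul_le_mul (hm k) ih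
    simpa [M, pow_succ, mul_comm] using this

lemma M_pos (hm : ∀ k, 2 ≤ m k) (k : ℕ) : 0 < M m k :=
  lt_of_lt_of_le (pow_pos (by norm_num : (0:ℕ) < 2) k) (two_pow_le_M hm k)

lemma digit_eq_zero {n j : ℕ} (h : n < M m j) : digit m n j = 0 := by
  simp [digit, Nat.div_eq_of_lt h]

lemma digit_high (hm : ∀ k, 2 ≤ m k) {n j : ℕ} (h : n < 2 ^ j) : digit m n j = 0 :=
  digit_eq_zero (lt_of_lt_of_le h (two_pow_le_M hm j))

lemma digit_add_lt {k j t q : ℕ} (ht : t < M m k) (hj : j < k) :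
    digit m (t + M m k * q) j = digit m t j := by
  have hMk : 0 < M m k := lt_of_le_of_lt (Nat.zero_le _) ht
  obtain ⟨d, hd⟩ : M m (j+1) ∣ M m k := M_dvd hj
  have hMj : 0 < M m j := Nat.pos_of_dvd_of_pos (M_dvd (Nat.le_of_lt hj)) hMk
  have : M m k * q = M m j * (m j * (d * q)) := by
    rw [hd]; simp [M]; ring
  rw [digit, digit, this, Nat.add_mul_div_left t _ hMj, Nat.add_mul_mod_self_left]

lemma digit_add_ge {k j t q : ℕ} (ht : t < M m k) (hj : k ≤ j) :
    digit m (t + M m k * q) j = digit m (M m k * q) j := by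
  have hMk : 0 < M m k := lt_of_le_of_lt (Nat.zero_le _) ht
  obtain ⟨d, hd⟩ : M m k ∣ M m j := M_dvd hj
  have h1 : (t + M m k * q) / M m j = q / d := by
    rw [hd, ← Nat.div_div_eq_div_mul, Nat.add_mul_div_left t _ hMk,
      Nat.div_eq_of_lt ht, Nat.zero_add]
  have h2 : (M m k * q) / M m j = q / d := by
    rw [hd, ← Nat.div_div_eq_div_mul, Nat.mul_div_cancel_left _ hMk]
  rw [digit, digit, h1, h2]

lemma psi_eq_prod (hm : ∀ k, 2 ≤ m k) {n R : ℕ} (hR : n + 1 ≤ R) (x : G m) :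
    psi m n x = ∏ j ∈ Finset.range R, rad m j x ^ digit m n j := by
  rw [psi]
  apply Finset.prod_subset (Finset.range_subset_range.mpr hR)
  intro j _ hj
  simp only [Finset.mem_range, not_lt] at hj
  have : n < 2 ^ j := lt_of_lt_of_le (Nat.lt_two_pow_self (n := n)) (Nat.pow_le_pow_right (by norm_num) (by omega))
  rw [digit_high hm this, pow_zero]

lemma M_le_M {j k : ℕ} (hm : ∀ k, 2 ≤ m k) (h : j ≤ k) : M m j ≤ M m k :=
  Nat.le_of_dvd (M_pos hm k) (M_dvd h)

lemma psi_add (hm : ∀ k, 2 ≤ m k) {k t q : ℕ} (ht : t < M m k) (x : G m) :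
    psi m (t + M m k * q) x = psi m t x * psi m (M m k * q) x := by
  set R := t + M m k * q + 1 with hR
  rw [psi_eq_prod hm (le_refl R) x, psi_eq_prod hm (by omega : t + 1 ≤ R) x,
    psi_eq_prod hm (by omega : M m k * q + 1 ≤ R) x, ← Finset.prod_mul_distrib]
  apply Finset.prod_congr rfl
  intro j _
  rcases Nat.lt_or_ge j k with hj | hj
  · have h1 := digit_add_lt (m := m) ht hj (q := q)
    have h2 : digit m (M m k * q) j = 0 := by
      have := digit_add_lt (m := m) (t := 0) (lt_of_le_of_lt (Nat.zero_le _) ht) hj (q := q)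
      simpa [digit, Nat.zero_div] using this
    rw [h1, h2, pow_zero, mul_one]
  · have h1 := digit_add_ge (m := m) ht hj (q := q)
    have h2 : digit m t j = 0 := digit_eq_zero (lt_of_lt_of_le ht (M_le_M hm hj))
    rw [h1, h2, pow_zero, one_mul]

lemma psi_zero (x : G m) : psi m 0 x = 1 := by
  simp [psi, digit]

lemma psi_single (hm : ∀ k, 2 ≤ m k) {k a : ℕ} (ha : a < m k) (x : G m) :
    psi m (M m k * a) x = rad m k x ^ a := by
  have hMk := M_pos hm k
  have hdig : ∀ j, digit m (M m k * a) j = if j = k then a else 0 := by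
    intro j
    rcases lt_trichotomy j k with hj | hj | hj
    · have := digit_add_lt (m := m) (t := 0) (q := a) hMk hj
      simp only [Nat.zero_add] at this
      rw [this, if_neg (Nat.ne_of_lt hj)]
      simp [digit, Nat.zero_div]
    · subst hj
      rw [if_pos rfl, digit, Nat.mul_div_cancel_left _ hMk, Nat.mod_eq_of_lt ha]
    · rw [if_neg (Nat.ne_of_gt hj)]
      apply digit_eq_zero
      calc M m k * a < M m k * m k := by
            exact (Nat.mul_lt_mul_left hMk).mpr ha
        _ = M m (k+1) := by simp [M]; ring
        _ ≤ M m j := M_le_M hm hj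
  rw [psi]
  have hk : k ∈ Finset.range (M m k * a + 1) ∨ a = 0 := by
    rcases Nat.eq_zero_or_pos a with h | h
    · right; exact h
    · left
      simp only [Finset.mem_range]
      have h1 : 2 ^ k ≤ M m k := two_pow_le_M hm k
      have h2 : k < 2 ^ k := Nat.lt_two_pow_self (n := k)
      have : M m k ≤ M m k * a := Nat.le_mul_of_pos_right _ h
      omega
  rcases hk with hk | hk
  · have : ∀ j ∈ Finset.range (M m k * a + 1), rad m j x ^ digit m (M m k * a) j
        = if j = k then rad m k x ^ a else 1 := by
      intro j _; rw [hdig j]; by_cases h : j = k <;> simp [h]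
    rw [Finset.prod_congr rfl this, Finset.prod_ite_eq' _ _ (fun _ => rad m k x ^ a), if_pos hk]
  · subst hk
    simp only [Nat.mul_zero, pow_zero]
    exact psi_zero x

lemma rad_eq_exp (k : ℕ) (x : G m) :
    rad m k x = Complex.exp (((2 * Real.pi * ((x k).val : ℝ) / (m k : ℝ) : ℝ) : ℂ) * Complex.I) := by
  rw [rad]
  congr 1
  push_cast
  ring

lemma abs_rad (k : ℕ) (x : G m) : ‖rad m k x‖ = 1 := by
  rw [rad_eq_exp]; exact Complex.norm_exp_ofReal_mul_I _

lemma abs_psi (n : ℕ) (x : G m) : ‖psi m n x‖ = 1 := by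
  rw [psi, norm_prod]
  apply Finset.prod_eq_one
  intro j _
  rw [norm_pow, abs_rad, one_pow]

open Complex in
lemma sum_range_mul_split (f : ℕ → ℂ) (N P : ℕ) :
    ∑ j ∈ Finset.range (N * P), f j = ∑ q ∈ Finset.range N, ∑ t ∈ Finset.range P, f (q * P + t) := by
  induction N with
  | zero => simp
  | succ N ih =>
    rw [Nat.succ_mul, Finset.sum_range_add, ih, Finset.sum_range_succ]

lemma sum_range_split (f : ℕ → ℂ) (N P r : ℕ) :
    ∑ j ∈ Finset.range (N * P + r), f j =
      (∑ q ∈ Finset.range N, ∑ t ∈ Finset.range P, f (q * P + t))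
        + ∑ t ∈ Finset.range r, f (N * P + t) := by
  rw [Finset.sum_range_add, sum_range_mul_split]

lemma tri_sum (g : ℕ → ℂ) (n : ℕ) :
    ∑ k ∈ Finset.range n, ∑ j ∈ Finset.range k, g j
      = ∑ j ∈ Finset.range n, ((n - 1 - j : ℕ) : ℂ) * g j := by
  induction n with
  | zero => simp
  | succ n ih =>
    rw [Finset.sum_range_succ, ih, Finset.sum_range_succ (fun j => ((n + 1 - 1 - j : ℕ) : ℂ) * g j)]
    have h1 : ((n + 1 - 1 - n : ℕ) : ℂ) * g n = 0 := by norm_num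
    rw [h1, add_zero, ← Finset.sum_add_distrib]
    apply Finset.sum_congr rfl
    intro j hj
    simp only [Finset.mem_range] at hj
    have : ((n + 1 - 1 - j : ℕ) : ℂ) = ((n - 1 - j : ℕ) : ℂ) + 1 := by
      have : n + 1 - 1 - j = (n - 1 - j) + 1 := by omega
      rw [this]; push_cast; ring
    rw [this]; ring

lemma sum_mul_geom (z : ℂ) (k : ℕ) :
    (z - 1) * ∑ a ∈ Finset.range k, (a : ℂ) * z ^ a
      = k * z ^ k - z * ∑ a ∈ Finset.range k, z ^ a := by
  induction k with
  | zero => simp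
  | succ k ih =>
    rw [Finset.sum_range_succ, Finset.sum_range_succ (fun a => z ^ a), mul_add, ih]
    push_cast
    ring

lemma norm_exp_theta_sub_one (θ : ℝ) :
    ‖Complex.exp ((θ : ℂ) * Complex.I) - 1‖ ^ 2 = 2 - 2 * Real.cos θ := by
  rw [Complex.exp_mul_I]
  have h1 : Complex.cos (θ : ℂ) = ((Real.cos θ : ℝ) : ℂ) := (Complex.ofReal_cos θ).symm
  have h2 : Complex.sin (θ : ℂ) = ((Real.sin θ : ℝ) : ℂ) := (Complex.ofReal_sin θ).symm
  rw [h1, h2]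
  have : ((Real.cos θ : ℝ) : ℂ) + ((Real.sin θ : ℝ) : ℂ) * Complex.I - 1
      = ((Real.cos θ - 1 : ℝ) : ℂ) + ((Real.sin θ : ℝ) : ℂ) * Complex.I := by
    push_cast; ring
  rw [this, Complex.sq_norm, Complex.normSq_add_mul_I]
  nlinarith [Real.sin_sq_add_cos_sq θ]

lemma cos_antitone_aux {mm a : ℕ} (h2 : 2 ≤ mm) (ha1 : 1 ≤ a) (ha : a < mm) :
    Real.cos (2 * Real.pi * a / mm) ≤ Real.cos (2 * Real.pi / mm) := by
  have hpi := Real.pi_pos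
  have hmm : (2 : ℝ) ≤ (mm : ℝ) := by exact_mod_cast h2
  have hmm0 : (0 : ℝ) < mm := by linarith
  have ha1' : (1 : ℝ) ≤ (a : ℝ) := by exact_mod_cast ha1
  have ha' : (a : ℝ) ≤ (mm : ℝ) - 1 := by
    have : (a : ℝ) + 1 ≤ mm := by exact_mod_cast ha
    linarith
  set θ1 := 2 * Real.pi / mm with hθ1
  set θa := 2 * Real.pi * a / mm with hθa
  have hθ1pos : 0 < θ1 := by positivity
  have hθ1pi : θ1 ≤ Real.pi := by
    rw [hθ1, div_le_iff₀ hmm0]; nlinarith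
  have h1a : θ1 ≤ θa := by
    rw [hθ1, hθa]
    exact (div_le_div_iff_of_pos_right hmm0).mpr (by nlinarith)
  have haub : θa ≤ 2 * Real.pi - θ1 := by
    have he : 2 * Real.pi - θ1 = 2 * Real.pi * ((mm : ℝ) - 1) / mm := by
      rw [hθ1]; field_simp
    rw [hθa, he]
    exact (div_le_div_iff_of_pos_right hmm0).mpr (by nlinarith)
  rcases le_or_gt θa Real.pi with hc | hc
  · exact Real.cos_le_cos_of_nonneg_of_le_pi (le_of_lt hθ1pos) hc h1a
  · calc Real.cos θa = Real.cos (2 * Real.pi - θa) := (Real.cos_two_pi_sub θa).symm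
      _ ≤ Real.cos θ1 := Real.cos_le_cos_of_nonneg_of_le_pi (le_of_lt hθ1pos)
          (by linarith) (by linarith)

lemma rad_pow_m (k : ℕ) (x : G m) (hk : m k ≠ 0) : rad m k x ^ (m k) = 1 := by
  rw [rad_eq_exp, ← Complex.exp_nat_mul]
  have : (m k : ℂ) * (((2 * Real.pi * ((x k).val : ℝ) / (m k : ℝ) : ℝ) : ℂ) * Complex.I)
      = (((x k).val : ℤ) : ℂ) * (2 * (Real.pi : ℂ) * Complex.I) := by
    have hmk : (m k : ℂ) ≠ 0 := Nat.cast_ne_zero.mpr hk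
    push_cast
    field_simp
  rw [this, Complex.exp_int_mul_two_pi_mul_I]

lemma exp_theta_ne_one {mm : ℕ} (h2 : 2 ≤ mm) :
    Complex.exp (((2 * Real.pi / mm : ℝ) : ℂ) * Complex.I) ≠ 1 := by
  intro h
  rw [Complex.exp_eq_one_iff] at h
  obtain ⟨k, hk⟩ := h
  have hI : ((2 * Real.pi / mm : ℝ) : ℂ) = (k : ℂ) * (2 * (Real.pi : ℂ)) := by
    have := mul_right_cancel₀ Complex.I_ne_zero (by rw [hk]; ring :
      ((2 * Real.pi / mm : ℝ) : ℂ) * Complex.I = ((k : ℂ) * (2 * (Real.pi : ℂ))) * Complex.I)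
    exact this
  have hR : (2 * Real.pi / mm : ℝ) = (k : ℝ) * (2 * Real.pi) := by
    exact_mod_cast hI
  have hpi := Real.pi_pos
  have hmm : (2 : ℝ) ≤ (mm : ℝ) := by exact_mod_cast h2
  have h1 : 0 < 2 * Real.pi / mm := by positivity
  have h2' : 2 * Real.pi / mm ≤ Real.pi := by
    rw [div_le_iff₀ (by linarith)]; nlinarith
  rcases le_or_gt (k : ℝ) 0 with hk0 | hk0
  · nlinarith
  · have : (1 : ℝ) ≤ (k : ℝ) := by exact_mod_cast hk0
    nlinarith

lemma chord {mm a : ℕ} (h2 : 2 ≤ mm) (ha1 : 1 ≤ a) (ha : a < mm) :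
    ‖Complex.exp (((2 * Real.pi / mm : ℝ) : ℂ) * Complex.I) - 1‖
      ≤ ‖Complex.exp (((2 * Real.pi / mm : ℝ) : ℂ) * Complex.I) ^ a - 1‖ := by
  have hpow : Complex.exp (((2 * Real.pi / mm : ℝ) : ℂ) * Complex.I) ^ a
      = Complex.exp (((2 * Real.pi * a / mm : ℝ) : ℂ) * Complex.I) := by
    rw [← Complex.exp_nat_mul]
    congr 1
    push_cast
    ring
  rw [hpow]
  apply le_of_pow_le_pow_left₀ (two_ne_zero) (norm_nonneg _)
  rw [norm_exp_theta_sub_one, norm_exp_theta_sub_one]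
  linarith [cos_antitone_aux (mm := mm) (a := a) h2 ha1 ha]

lemma geom_sum_zero {z : ℂ} {mm : ℕ} (hz : z ≠ 1) (hpow : z ^ mm = 1) :
    ∑ a ∈ Finset.range mm, z ^ a = 0 := by
  rw [geom_sum_eq hz, hpow, sub_self, zero_div]

lemma abs_sigma {z : ℂ} {mm : ℕ} (hz : z ≠ 1) (hpow : z ^ mm = 1) (hn : ‖z‖ = 1) :
    (mm : ℝ) / 2 ≤ ‖∑ a ∈ Finset.range mm, (a : ℂ) * z ^ a‖ := by
  have key := sum_mul_geom z mm
  rw [geom_sum_zero hz hpow, hpow, mul_zero, mul_one, sub_zero] at key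
  have h1 : ‖z - 1‖ * ‖∑ a ∈ Finset.range mm, (a : ℂ) * z ^ a‖ = (mm : ℝ) := by
    rw [← norm_mul, key, Complex.norm_natCast]
  have h2 : ‖z - 1‖ ≤ 2 := by
    calc ‖z - 1‖ ≤ ‖z‖ + ‖(1 : ℂ)‖ := norm_sub_le _ _
      _ = 2 := by rw [hn, norm_one]; norm_num
  nlinarith [norm_nonneg (∑ a ∈ Finset.range mm, (a : ℂ) * z ^ a), norm_nonneg (z - 1)]

lemma psi_block (hm : ∀ k, 2 ≤ m k) (x : G m) (k b a : ℕ) (ha : a < m k) :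
    psi m (M m k * (b * m k + a)) x = rad m k x ^ a * psi m (M m (k + 1) * b) x := by
  have hMk := M_pos hm k
  have h : M m k * (b * m k + a) = M m k * a + M m (k + 1) * b := by
    simp only [M]; ring
  have hlt : M m k * a < M m (k + 1) := by
    simp only [M]
    calc M m k * a < M m k * m k := (Nat.mul_lt_mul_left hMk).mpr ha
      _ = m k * M m k := by ring
  rw [h, psi_add hm hlt x, psi_single hm ha x]

lemma C_eq (hm : ∀ k, 2 ≤ m k) (x : G m) (k B₀ dl : ℕ) (hdl : dl ≤ m k)
    (hz : ∑ a ∈ Finset.range (m k), rad m k x ^ a = 0) :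
    ∑ b ∈ Finset.range (B₀ * m k + dl), psi m (M m k * b) x
      = psi m (M m (k + 1) * B₀) x * ∑ t ∈ Finset.range dl, rad m k x ^ t := by
  rw [sum_range_split]
  have h1 : ∀ b ∈ Finset.range B₀, ∑ t ∈ Finset.range (m k), psi m (M m k * (b * m k + t)) x
      = 0 := by
    intro b _
    have : ∀ t ∈ Finset.range (m k), psi m (M m k * (b * m k + t)) x
        = rad m k x ^ t * psi m (M m (k + 1) * b) x :=
      fun t htt => psi_block hm x k b t (Finset.mem_range.mp htt)
    rw [Finset.sum_congr rfl this, ← Finset.sum_mul, hz, zero_mul]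
  rw [Finset.sum_congr rfl h1, Finset.sum_const, smul_zero, zero_add]
  have h2 : ∀ t ∈ Finset.range dl, psi m (M m k * (B₀ * m k + t)) x
      = rad m k x ^ t * psi m (M m (k + 1) * B₀) x :=
    fun t htt => psi_block hm x k B₀ t (lt_of_lt_of_le (Finset.mem_range.mp htt) hdl)
  rw [Finset.sum_congr rfl h2, ← Finset.sum_mul, mul_comm]

lemma B_eq (hm : ∀ k, 2 ≤ m k) (x : G m) (k N' : ℕ)
    (hz : ∑ a ∈ Finset.range (m k), rad m k x ^ a = 0) :
    ∑ q ∈ Finset.range (N' * m k), (q : ℂ) * psi m (M m k * q) x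
      = (∑ a ∈ Finset.range (m k), (a : ℂ) * rad m k x ^ a)
          * ∑ b ∈ Finset.range N', psi m (M m (k + 1) * b) x := by
  rw [sum_range_mul_split]
  have h1 : ∀ b ∈ Finset.range N',
      ∑ a ∈ Finset.range (m k), ((b * m k + a : ℕ) : ℂ) * psi m (M m k * (b * m k + a)) x
        = (∑ a ∈ Finset.range (m k), (a : ℂ) * rad m k x ^ a) * psi m (M m (k + 1) * b) x := by
    intro b _
    have h2 : ∀ a ∈ Finset.range (m k),
        ((b * m k + a : ℕ) : ℂ) * psi m (M m k * (b * m k + a)) x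
          = ((b : ℂ) * (m k : ℂ)) * (rad m k x ^ a * psi m (M m (k + 1) * b) x)
            + (a : ℂ) * rad m k x ^ a * psi m (M m (k + 1) * b) x := by
      intro a haa
      rw [psi_block hm x k b a (Finset.mem_range.mp haa)]
      push_cast
      ring
    rw [Finset.sum_congr rfl h2, Finset.sum_add_distrib]
    have h3 : ∑ a ∈ Finset.range (m k),
        ((b : ℂ) * (m k : ℂ)) * (rad m k x ^ a * psi m (M m (k + 1) * b) x) = 0 := by
      rw [← Finset.mul_sum, ← Finset.sum_mul, hz, zero_mul, mul_zero]
    rw [h3, zero_add, ← Finset.sum_mul]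
  rw [Finset.sum_congr rfl h1, ← Finset.mul_sum]

lemma core {m : ℕ → ℕ} (hm : ∀ k, 2 ≤ m k) (x : G m) (L₀ n : ℕ)
    (hd1 : digit m n L₀ = 0) (hd2 : digit m n (L₀ + 1) ≠ 0)
    (hx0 : ∀ j, j < L₀ → x j = 0) (hx1 : x L₀ = 1) (hx2 : x (L₀ + 1) = 1) :
    (M m L₀ : ℝ) ^ 2 / 2 ≤ ‖∑ k ∈ Finset.range n, D m k x‖ := by
  have hPpos : 0 < M m L₀ := M_pos hm L₀
  have hm₁ : 2 ≤ m L₀ := hm L₀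
  have hm₂ : 2 ≤ m (L₀ + 1) := hm (L₀ + 1)
  -- rademacher values
  have hε₁ : rad m L₀ x = Complex.exp (((2 * Real.pi / (m L₀) : ℝ) : ℂ) * Complex.I) := by
    rw [rad_eq_exp, hx1]
    have hv : ((1 : ZMod (m L₀)).val : ℝ) = 1 := by
      rw [ZMod.val_one_eq_one_mod, Nat.mod_eq_of_lt (by omega)]
      norm_num
    rw [hv, mul_one]
  have hε₂ : rad m (L₀ + 1) x = Complex.exp (((2 * Real.pi / (m (L₀ + 1)) : ℝ) : ℂ) * Complex.I) := by
    rw [rad_eq_exp, hx2]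
    have hv : ((1 : ZMod (m (L₀ + 1))).val : ℝ) = 1 := by
      rw [ZMod.val_one_eq_one_mod, Nat.mod_eq_of_lt (by omega)]
      norm_num
    rw [hv, mul_one]
  have hrad0 : ∀ j, j < L₀ → rad m j x = 1 := by
    intro j hj
    rw [rad_eq_exp, hx0 j hj, ZMod.val_zero]
    norm_num
  have hz₁ : ∑ a ∈ Finset.range (m L₀), rad m L₀ x ^ a = 0 :=
    geom_sum_zero (by rw [hε₁]; exact exp_theta_ne_one hm₁)
      (rad_pow_m L₀ x (by omega))
  have hz₂ : ∑ a ∈ Finset.range (m (L₀ + 1)), rad m (L₀ + 1) x ^ a = 0 :=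
    geom_sum_zero (by rw [hε₂]; exact exp_theta_ne_one hm₂)
      (rad_pow_m (L₀ + 1) x (by omega))
  have hpsilow : ∀ t, t < M m L₀ → psi m t x = 1 := by
    intro t ht
    rw [psi]
    apply Finset.prod_eq_one
    intro j _
    rcases Nat.lt_or_ge j L₀ with h | h
    · rw [hrad0 j h, one_pow]
    · rw [digit_eq_zero (lt_of_lt_of_le ht (M_le_M hm h)), pow_zero]
  -- arithmetic decomposition of n
  obtain ⟨N, r, hnNP, hrP, hNdef⟩ :
      ∃ N r, N * M m L₀ + r = n ∧ r < M m L₀ ∧ N = n / M m L₀ :=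
    ⟨n / M m L₀, n % M m L₀, by rw [mul_comm]; exact Nat.div_add_mod n _, Nat.mod_lt _ hPpos, rfl⟩
  have hNm : N % m L₀ = 0 := by rw [hNdef]; exact hd1
  obtain ⟨N', hNN'⟩ : ∃ N', N = N' * m L₀ :=
    ⟨N / m L₀, (Nat.div_mul_cancel (Nat.dvd_of_mod_eq_zero hNm)).symm⟩
  have hN'eq : N' = n / M m (L₀ + 1) := by
    have h1 : M m (L₀ + 1) = M m L₀ * m L₀ := by
      rw [show M m (L₀ + 1) = m L₀ * M m L₀ from rfl]; ring
    have h2 : N' = N / m L₀ := by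
      rw [hNN', Nat.mul_div_cancel _ (by omega : 0 < m L₀)]
    rw [h2, hNdef, h1, Nat.div_div_eq_div_mul]
  set dl := digit m n (L₀ + 1) with hdldef
  have hdlN' : N' % m (L₀ + 1) = dl := by rw [hN'eq]; rfl
  have hdl1 : 1 ≤ dl := Nat.pos_of_ne_zero hd2
  have hdlm : dl < m (L₀ + 1) := by
    rw [hdldef]
    exact Nat.mod_lt _ (by omega)
  obtain ⟨B₀, hN'B⟩ : ∃ B₀, N' = B₀ * m (L₀ + 1) + dl :=
    ⟨N' / m (L₀ + 1), by rw [← hdlN', mul_comm]; exact (Nat.div_add_mod N' _).symm⟩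
  -- abbreviations
  set G : ℂ := ∑ t ∈ Finset.range (M m L₀), (t : ℂ) with hGdef
  set σ₁ : ℂ := ∑ a ∈ Finset.range (m L₀), (a : ℂ) * rad m L₀ x ^ a with hσdef
  set g₂ : ℂ := ∑ t ∈ Finset.range dl, rad m (L₀ + 1) x ^ t with hgdef
  set T : ℂ := psi m (M m (L₀ + 1 + 1) * B₀) x with hTdef
  set E : ℂ := ∑ t ∈ Finset.range r,
    ((n - 1 - (N * M m L₀ + t) : ℕ) : ℂ) * psi m (N * M m L₀ + t) x with hEdef
  -- step 1 : triangular sum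
  have hDsum : ∑ k ∈ Finset.range n, D m k x
      = ∑ j ∈ Finset.range n, ((n - 1 - j : ℕ) : ℂ) * psi m j x := by
    simp only [D]
    exact tri_sum _ n
  -- step 2 : split the index range
  have hsplit := sum_range_split (fun j => ((n - 1 - j : ℕ) : ℂ) * psi m j x) N (M m L₀) r
  rw [hnNP] at hsplit
  -- step 3 : inner sums
  have hfirst : ∀ q ∈ Finset.range N,
      (∑ t ∈ Finset.range (M m L₀),
        ((n - 1 - (q * M m L₀ + t) : ℕ) : ℂ) * psi m (q * M m L₀ + t) x)
        = ((M m L₀ : ℂ) * ((n : ℂ) - 1) - G) * psi m (M m L₀ * q) x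
            - (M m L₀ : ℂ) ^ 2 * ((q : ℂ) * psi m (M m L₀ * q) x) := by
    intro q hq
    have hqN : q < N := Finset.mem_range.mp hq
    have hterm : ∀ t ∈ Finset.range (M m L₀),
        ((n - 1 - (q * M m L₀ + t) : ℕ) : ℂ) * psi m (q * M m L₀ + t) x
          = ((n : ℂ) - 1 - (q : ℂ) * (M m L₀ : ℂ) - (t : ℂ)) * psi m (M m L₀ * q) x := by
      intro t ht
      have htP := Finset.mem_range.mp ht
      have hle : q * M m L₀ + t + 1 ≤ n := by
        have h2 : (q + 1) * M m L₀ ≤ N * M m L₀ := Nat.mul_le_mul_right _ (by omega)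
        have h3 : q * M m L₀ + t + 1 ≤ (q + 1) * M m L₀ := by
          have h4 : (q + 1) * M m L₀ = q * M m L₀ + M m L₀ := by ring
          omega
        omega
      have hcast : ((n - 1 - (q * M m L₀ + t) : ℕ) : ℂ)
          = (n : ℂ) - 1 - (q : ℂ) * (M m L₀ : ℂ) - (t : ℂ) := by
        rw [Nat.cast_sub (by omega), Nat.cast_sub (by omega)]
        push_cast
        ring
      have hpsi1 : psi m (q * M m L₀ + t) x = psi m (M m L₀ * q) x := by
        rw [show q * M m L₀ + t = t + M m L₀ * q by ring, psi_add hm htP x,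
          hpsilow t htP, one_mul]
      rw [hcast, hpsi1]
    rw [Finset.sum_congr rfl hterm, ← Finset.sum_mul, Finset.sum_sub_distrib,
      Finset.sum_const, Finset.card_range, nsmul_eq_mul, ← hGdef]
    ring
  -- step 4 : the three structured sums
  have hA : ∑ q ∈ Finset.range N, psi m (M m L₀ * q) x = 0 := by
    have hc := C_eq hm x L₀ N' 0 (Nat.zero_le _) hz₁
    rw [Nat.add_zero] at hc
    rw [hNN', hc, Finset.range_zero, Finset.sum_empty, mul_zero]
  have hB : ∑ q ∈ Finset.range N, (q : ℂ) * psi m (M m L₀ * q) x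
      = σ₁ * ∑ b ∈ Finset.range N', psi m (M m (L₀ + 1) * b) x := by
    rw [hNN', hσdef]
    exact B_eq hm x L₀ N' hz₁
  have hC : ∑ b ∈ Finset.range N', psi m (M m (L₀ + 1) * b) x = T * g₂ := by
    rw [hN'B, hTdef, hgdef]
    exact C_eq hm x (L₀ + 1) B₀ dl (le_of_lt hdlm) hz₂
  -- step 5 : assemble
  have hS : ∑ k ∈ Finset.range n, D m k x
      = -((M m L₀ : ℂ) ^ 2 * (σ₁ * (T * g₂))) + E := by
    rw [hDsum, hsplit, Finset.sum_congr rfl hfirst, Finset.sum_sub_distrib,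
      ← Finset.mul_sum, ← Finset.mul_sum, hA, hB, hC, mul_zero, zero_sub, ← hEdef]
  -- step 6 : norm estimates
  have hnormσ : (m L₀ : ℝ) / 2 ≤ ‖σ₁‖ := by
    rw [hσdef]
    exact abs_sigma (by rw [hε₁]; exact exp_theta_ne_one hm₁)
      (rad_pow_m L₀ x (by omega))
      (by exact abs_rad L₀ x)
  have hnormg : 1 ≤ ‖g₂‖ := by
    have hne : rad m (L₀ + 1) x ≠ 1 := by rw [hε₂]; exact exp_theta_ne_one hm₂
    rw [hgdef, geom_sum_eq hne, norm_div]
    have h1 : 0 < ‖rad m (L₀ + 1) x - 1‖ := norm_pos_iff.mpr (sub_ne_zero.mpr hne)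
    rw [le_div_iff₀ h1, one_mul]
    calc ‖rad m (L₀ + 1) x - 1‖
        = ‖Complex.exp (((2 * Real.pi / (m (L₀ + 1)) : ℝ) : ℂ) * Complex.I) - 1‖ := by
          rw [hε₂]
      _ ≤ ‖Complex.exp (((2 * Real.pi / (m (L₀ + 1)) : ℝ) : ℂ) * Complex.I) ^ dl - 1‖ :=
          chord hm₂ hdl1 hdlm
      _ = ‖rad m (L₀ + 1) x ^ dl - 1‖ := by rw [hε₂]
  have hnormT : ‖T‖ = 1 := by
    rw [hTdef]
    exact abs_psi _ x
  have hP1 : (1 : ℝ) ≤ (M m L₀ : ℝ) := by exact_mod_cast hPpos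
  have hE : ‖E‖ ≤ ((M m L₀ : ℝ) ^ 2 - (M m L₀ : ℝ)) / 2 := by
    have hEb : ‖E‖ ≤ ∑ t ∈ Finset.range r, ((r - 1 - t : ℕ) : ℝ) := by
      rw [hEdef]
      refine le_trans (norm_sum_le _ _) (le_of_eq ?_)
      apply Finset.sum_congr rfl
      intro t ht
      have htr := Finset.mem_range.mp ht
      rw [norm_mul, Complex.norm_natCast, abs_psi, mul_one]
      congr 1
      omega
    have hgauss : ∑ t ∈ Finset.range r, ((r - 1 - t : ℕ) : ℝ)
        = ((∑ j ∈ Finset.range r, j : ℕ) : ℝ) := by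
      rw [Finset.sum_range_reflect (fun j => (j : ℝ)) r]
      exact (Nat.cast_sum _ _).symm
    have hid : (∑ j ∈ Finset.range r, j) * 2 = r * (r - 1) := Finset.sum_range_id_mul_two r
    have hrr : r * (r - 1) ≤ (M m L₀ - 1) * (M m L₀ - 1) :=
      Nat.mul_le_mul (by omega) (by omega)
    have hcast : ((M m L₀ - 1 : ℕ) : ℝ) = (M m L₀ : ℝ) - 1 := by
      rw [Nat.cast_sub (by omega)]
      norm_num
    have h2 : ((∑ j ∈ Finset.range r, j : ℕ) : ℝ) * 2 ≤ ((M m L₀ : ℝ) - 1) * ((M m L₀ : ℝ) - 1) := by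
      rw [← hcast]
      exact_mod_cast le_trans (le_of_eq hid) hrr
    rw [hgauss] at hEb
    nlinarith [hEb, h2, hP1]
  -- step 7 : finish
  have hmain : (M m L₀ : ℝ) ^ 2 ≤ ‖-((M m L₀ : ℂ) ^ 2 * (σ₁ * (T * g₂)))‖ := by
    rw [norm_neg, norm_mul, norm_mul, norm_mul, hnormT, norm_pow, Complex.norm_natCast]
    have hmR : (2 : ℝ) ≤ (m L₀ : ℝ) := by exact_mod_cast hm₁
    have h1 : 1 ≤ ‖σ₁‖ := by linarith
    have h2 : (1 : ℝ) ≤ ‖σ₁‖ * ‖g₂‖ := by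
      calc (1 : ℝ) = 1 * 1 := by norm_num
        _ ≤ ‖σ₁‖ * ‖g₂‖ := mul_le_mul h1 hnormg zero_le_one (by linarith)
    rw [one_mul]
    nlinarith [h2, sq_nonneg ((M m L₀ : ℝ))]
  have htri : ‖-((M m L₀ : ℂ) ^ 2 * (σ₁ * (T * g₂)))‖
      ≤ ‖∑ k ∈ Finset.range n, D m k x‖ + ‖E‖ := by
    rw [hS]
    calc ‖-((M m L₀ : ℂ) ^ 2 * (σ₁ * (T * g₂)))‖
        = ‖(-((M m L₀ : ℂ) ^ 2 * (σ₁ * (T * g₂))) + E) - E‖ := by ring_nf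
      _ ≤ ‖-((M m L₀ : ℂ) ^ 2 * (σ₁ * (T * g₂))) + E‖ + ‖E‖ := norm_sub_le _ _
  linarith [hmain, htri, hE]


/-- lower bound for the Fejér kernel on suitable cylinders, for `n` whose
nonzero digits come in blocks `[l_1, m_1], …, [l_s, m_s]` separated by gaps of length ≥ 2. -/
theorem statement3 (lam : ℕ) :
    ∃ c : ℝ, 0 < c ∧ ∀ m : ℕ → ℕ, (∀ k, 2 ≤ m k) → (∀ k, m k ≤ lam) →
      ∀ n : ℕ, 1 ≤ n →
      ∀ s : ℕ, 1 ≤ s →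
      ∀ l u : ℕ → ℕ,
        (∀ i ∈ Finset.Icc 1 s, l i ≤ u i) →
        (∀ i ∈ Finset.Icc 2 s, u (i - 1) + 2 ≤ l i) →
        (∀ k : ℕ, digit m n k ≠ 0 ↔ ∃ i ∈ Finset.Icc 1 s, l i ≤ k ∧ k ≤ u i) →
        ∀ i ∈ Finset.Icc 1 s, 1 ≤ l i →
          ∀ x ∈ cyl m (l i + 1) (e m (l i - 1) + e m (l i)),
            c * (M m (l i) : ℝ) ^ 2 ≤ (n : ℝ) * ‖K m n x‖ := by
  refine ⟨((2 : ℝ) * (lam + 1) ^ 2)⁻¹, by positivity, ?_⟩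
  intro m hm2 hml n hn s hs l u hlu hgap hdigits i hi hli x hx
  obtain ⟨hi1, his⟩ := Finset.mem_Icc.mp hi
  have horder : ∀ a b : ℕ, 1 ≤ a → a < b → b ≤ s → u a + 2 ≤ l b := by
    intro a b ha hab hbs
    induction b with
    | zero => omega
    | succ b ih =>
      rcases Nat.lt_or_ge a b with h' | h'
      · have h1 := ih h' (by omega)
        have h2 := hlu b (Finset.mem_Icc.mpr ⟨by omega, by omega⟩)
        have h3 := hgap (b + 1) (Finset.mem_Icc.mpr ⟨by omega, hbs⟩)
        simp only [Nat.add_sub_cancel] at h3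
        omega
      · have : a = b := by omega
        subst this
        have h3 := hgap (a + 1) (Finset.mem_Icc.mpr ⟨by omega, hbs⟩)
        simpa using h3
  have hdL1 : digit m n (l i - 1) = 0 := by
    by_contra h
    obtain ⟨i', hi', h1, h2⟩ := (hdigits (l i - 1)).mp h
    obtain ⟨hi'1, hi's⟩ := Finset.mem_Icc.mp hi'
    rcases lt_trichotomy i' i with hc | hc | hc
    · have := horder i' i hi'1 hc his
      omega
    · subst hc
      omega
    · have h4 := horder i i' hi1 hc hi's
      have h5 := hlu i hi
      omega
  have hdL : digit m n (l i) ≠ 0 :=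
    (hdigits (l i)).mpr ⟨i, hi, le_refl _, hlu i hi⟩
  obtain ⟨L₀, hL0⟩ : ∃ t, l i = t + 1 := ⟨l i - 1, by omega⟩
  rw [hL0] at hdL1 hdL hx ⊢
  simp only [Nat.add_sub_cancel] at hdL1 hx
  have hx' : ∀ j, j < L₀ + 1 + 1 → x j = (e m L₀ + e m (L₀ + 1)) j := hx
  have hx0 : ∀ j, j < L₀ → x j = 0 := by
    intro j hj
    rw [hx' j (by omega)]
    show e m L₀ j + e m (L₀ + 1) j = 0
    simp [e, show j ≠ L₀ by omega, show j ≠ L₀ + 1 by omega]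
  have hx1 : x L₀ = 1 := by
    rw [hx' L₀ (by omega)]
    show e m L₀ L₀ + e m (L₀ + 1) L₀ = 1
    simp [e, show L₀ ≠ L₀ + 1 by omega]
  have hx2 : x (L₀ + 1) = 1 := by
    rw [hx' (L₀ + 1) (by omega)]
    show e m L₀ (L₀ + 1) + e m (L₀ + 1) (L₀ + 1) = 1
    simp [e, show L₀ + 1 ≠ L₀ by omega]
  have hcore := core hm2 x L₀ n hdL1 hdL hx0 hx1 hx2
  have hn0 : (n : ℝ) ≠ 0 := by
    have : (0 : ℝ) < n := by exact_mod_cast hn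
    linarith
  have hKS : (n : ℝ) * ‖K m n x‖ = ‖∑ k ∈ Finset.range n, D m k x‖ := by
    rw [K, norm_mul, norm_inv, Complex.norm_natCast]
    field_simp
  rw [hKS]
  have hMcast : (M m (L₀ + 1) : ℝ) = (m L₀ : ℝ) * (M m L₀ : ℝ) := by
    rw [show M m (L₀ + 1) = m L₀ * M m L₀ from rfl]
    push_cast
    ring
  have hmlam : (m L₀ : ℝ) ≤ (lam : ℝ) + 1 := by
    have := hml L₀
    have : (m L₀ : ℝ) ≤ (lam : ℝ) := by exact_mod_cast this
    linarith
  have hmpos : (0 : ℝ) ≤ (m L₀ : ℝ) := Nat.cast_nonneg _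
  have hPnn : (0 : ℝ) ≤ (M m L₀ : ℝ) := Nat.cast_nonneg _
  have hlampos : (0 : ℝ) < (lam : ℝ) + 1 := by positivity
  calc ((2 : ℝ) * (lam + 1) ^ 2)⁻¹ * (M m (L₀ + 1) : ℝ) ^ 2
      ≤ (M m L₀ : ℝ) ^ 2 / 2 := by
        rw [hMcast, mul_pow, inv_mul_le_iff₀ (by positivity)]
        have h1 : (m L₀ : ℝ) ^ 2 ≤ ((lam : ℝ) + 1) ^ 2 := by nlinarith
        nlinarith [sq_nonneg (M m L₀ : ℝ)]
    _ ≤ ‖∑ k ∈ Finset.range n, D m k x‖ := hcore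


end Vilenkin

end
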